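/- For every n ≥ 0, the number of 01-fillings of the staircase shape Δ_n with at most one 1 per row and per column equals the number of sequences (λ^0, λ^1, …, λ^{2n}) of partitions with λ^0 = λ^{2n} = ∅ such that for each i, λ^{2i+1} is equal to λ^{2i} or obtained from it by adding a square, and λ^{2i+2} is equal to λ^{2i+1} or obtained from it by deleting a square. -/

import Mathlib

/-- A 01-filling of the staircase shape `Δ_n` with at most one 1 per row and per column:
a set `S` of cells `(r, c)` with `1 ≤ c ≤ r ≤ n`, no two sharing a row and no two sharing
a column. -/
def IsFilling (n : ℕ) (S : Finset (ℕ × ℕ)) : Prop :=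
  (∀ p ∈ S, 1 ≤ p.2 ∧ p.2 ≤ p.1 ∧ p.1 ≤ n) ∧
  (∀ p ∈ S, ∀ q ∈ S, p.1 = q.1 → p = q) ∧
  (∀ p ∈ S, ∀ q ∈ S, p.2 = q.2 → p = q)

/-- `S` contains an NE-chain of length `k`: cells `(r_1, c_1), …, (r_k, c_k) ∈ S` with
`r_1 > r_2 > … > r_k` and `c_1 ≤ c_2 ≤ … ≤ c_k`. -/
def NEChain (S : Finset (ℕ × ℕ)) (k : ℕ) : Prop :=
  ∃ f : Fin k → ℕ × ℕ, (∀ t, f t ∈ S) ∧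
    (∀ s t : Fin k, s < t → (f t).1 < (f s).1) ∧
    (∀ s t : Fin k, s < t → (f s).2 ≤ (f t).2)

/-- A partition: a weakly decreasing, eventually-zero sequence of nonnegative integers
(`parts i` is the `(i+1)`-st part `λ_{i+1}`). -/
structure Partn where
  parts : ℕ → ℕ
  antitone : ∀ i j, i ≤ j → parts j ≤ parts i
  eventually_zero : ∃ N, ∀ i, N ≤ i → parts i = 0

/-- The empty partition `∅`. -/
def Partn.empty : Partn :=
  ⟨fun _ => 0, fun _ _ _ => le_rfl, ⟨0, fun _ _ => rfl⟩⟩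

/-- `lam` is obtained from `μ` by adding a square (equivalently, `μ` is obtained from
`lam` by deleting a square): one part grows by 1 and all other parts agree. -/
def AddSqP (μ lam : Partn) : Prop :=
  ∃ j, lam.parts j = μ.parts j + 1 ∧ ∀ i, i ≠ j → lam.parts i = μ.parts i




noncomputable section
open Classical

@[ext] lemma Partn.ext' {p q : Partn} (h : p.parts = q.parts) : p = q := by
  cases p; cases q; simp_all

/-- index `j` is an addable corner of `μ` -/
def Addable (μ : Partn) (j : ℕ) : Prop := j = 0 ∨ μ.parts j < μ.parts (j - 1)

/-- index `j` is a removable corner of `μ` -/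
def Removable (μ : Partn) (j : ℕ) : Prop := μ.parts (j + 1) < μ.parts j

/-- add a box in row `j` (junk value `μ` if not addable) -/
def addB (μ : Partn) (j : ℕ) : Partn :=
  if h : Addable μ j then
    { parts := fun i => if i = j then μ.parts j + 1 else μ.parts i
      antitone := by
        intro i i' hii'
        by_cases hi : i = j <;> by_cases hi' : i' = j <;>
          simp only [hi, hi', if_true, ite_true, ite_false, if_neg, not_false_iff] <;> try simp_all
        · -- i = j, i' ≠ j : parts i' ≤ parts j + 1
          have : μ.parts i' ≤ μ.parts j := μ.antitone _ _ hii'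
          omega
        · -- i ≠ j, i' = j : parts j + 1 ≤ parts i, with i ≤ j, i ≠ j so i < j
          rcases h with h0 | hlt
          · omega
          · have : μ.parts (j - 1) ≤ μ.parts i := μ.antitone _ _ (by omega)
            omega
        · exact μ.antitone _ _ hii'
      eventually_zero := by
        obtain ⟨N, hN⟩ := μ.eventually_zero
        exact ⟨max N (j+1), fun i hi => by
          have : ¬ (i = j) := by omega
          simp only [if_neg this]
          exact hN i (le_trans (le_max_left _ _) hi)⟩ }
  else μ

/-- delete the box at the end of row `j` (junk value `μ` if not removable) -/
def delB (μ : Partn) (j : ℕ) : Partn :=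
  if h : Removable μ j then
    { parts := fun i => if i = j then μ.parts j - 1 else μ.parts i
      antitone := by
        intro i i' hii'
        unfold Removable at h
        by_cases hi : i = j <;> by_cases hi' : i' = j <;>
          simp only [hi, hi', if_true, ite_true, ite_false, if_neg, not_false_iff] <;> try simp_all
        · -- i = j, i' ≠ j, j ≤ i' : parts i' ≤ parts j - 1
          have hji' : j + 1 ≤ i' := by omega
          have : μ.parts i' ≤ μ.parts (j+1) := μ.antitone _ _ hji'
          omega
        · -- i ≠ j, i' = j : parts j - 1 ≤ parts i
          have : μ.parts j ≤ μ.parts i := μ.antitone _ _ hii'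
          omega
        · exact μ.antitone _ _ hii'
      eventually_zero := by
        obtain ⟨N, hN⟩ := μ.eventually_zero
        exact ⟨max N (j+1), fun i hi => by
          have : ¬ (i = j) := by omega
          simp only [if_neg this]
          exact hN i (le_trans (le_max_left _ _) hi)⟩ }
  else μ

lemma addB_parts {μ : Partn} {j : ℕ} (h : Addable μ j) :
    (addB μ j).parts = fun i => if i = j then μ.parts j + 1 else μ.parts i := by
  simp [addB, h]

lemma delB_parts {μ : Partn} {j : ℕ} (h : Removable μ j) :
    (delB μ j).parts = fun i => if i = j then μ.parts j - 1 else μ.parts i := by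
  simp [delB, h]

lemma addSqP_iff {μ lam : Partn} :
    AddSqP μ lam ↔ ∃ j, Addable μ j ∧ lam = addB μ j := by
  constructor
  · rintro ⟨j, hj, hoth⟩
    have hadd : Addable μ j := by
      rcases Classical.em (j = 0) with rfl | hj0
      · exact Or.inl rfl
      · right
        have h1 : lam.parts j ≤ lam.parts (j-1) := lam.antitone _ _ (by omega)
        have h2 : lam.parts (j-1) = μ.parts (j-1) := hoth _ (by omega)
        omega
    refine ⟨j, hadd, ?_⟩
    ext1
    rw [addB_parts hadd]
    funext i
    by_cases hi : i = j
    · subst hi; simp [hj]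
    · simp [hi, hoth _ hi]
  · rintro ⟨j, hadd, rfl⟩
    refine ⟨j, ?_, ?_⟩
    · rw [addB_parts hadd]; simp
    · intro i hi; rw [addB_parts hadd]; simp [hi]

lemma delSqP_iff {μ nu : Partn} :
    AddSqP nu μ ↔ ∃ j, Removable μ j ∧ nu = delB μ j := by
  constructor
  · rintro ⟨j, hj, hoth⟩
    have hrem : Removable μ j := by
      unfold Removable
      have h1 : nu.parts (j+1) ≤ nu.parts j := nu.antitone _ _ (Nat.le_succ _)
      have h2 : μ.parts (j+1) = nu.parts (j+1) := hoth _ (by omega)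
      omega
    refine ⟨j, hrem, ?_⟩
    ext1
    rw [delB_parts hrem]
    funext i
    by_cases hi : i = j
    · subst hi; simp [hj]
    · simp [hi, (hoth _ hi).symm]
  · rintro ⟨j, hrem, rfl⟩
    unfold Removable at hrem
    refine ⟨j, ?_, ?_⟩
    · rw [delB_parts hrem]
      simp only [if_pos rfl]
      simp only [if_true]
      omega
    · intro i hi; rw [delB_parts hrem]; simp [hi]

end




section Chunk2
open Classical

/-- a bound beyond which all parts vanish -/
noncomputable def bnd (μ : Partn) : ℕ := Classical.choose μ.eventually_zero

lemma bnd_spec (μ : Partn) : ∀ i, bnd μ ≤ i → μ.parts i = 0 :=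
  Classical.choose_spec μ.eventually_zero

lemma addable_le_bnd {μ : Partn} {j : ℕ} (h : Addable μ j) : j ≤ bnd μ := by
  by_contra hc
  rcases h with h0 | hlt
  · omega
  · have : μ.parts (j-1) = 0 := bnd_spec μ _ (by omega)
    omega

lemma removable_lt_bnd {μ : Partn} {j : ℕ} (h : Removable μ j) : j < bnd μ := by
  by_contra hc
  have : μ.parts j = 0 := bnd_spec μ _ (by omega)
  unfold Removable at h
  omega

lemma addable_finite (μ : Partn) : {j | Addable μ j}.Finite :=
  Set.Finite.subset (Set.finite_Iic (bnd μ)) (fun j hj => addable_le_bnd hj)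

lemma removable_finite (μ : Partn) : {j | Removable μ j}.Finite :=
  Set.Finite.subset (Set.finite_Iic (bnd μ)) (fun j hj => le_of_lt (removable_lt_bnd hj))

noncomputable def addIdx (μ : Partn) : Finset ℕ := (addable_finite μ).toFinset
noncomputable def remIdx (μ : Partn) : Finset ℕ := (removable_finite μ).toFinset

@[simp] lemma mem_addIdx {μ : Partn} {j : ℕ} : j ∈ addIdx μ ↔ Addable μ j := by
  rw [addIdx, Set.Finite.mem_toFinset]; exact Iff.rfl

@[simp] lemma mem_remIdx {μ : Partn} {j : ℕ} : j ∈ remIdx μ ↔ Removable μ j := by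
  rw [remIdx, Set.Finite.mem_toFinset]; exact Iff.rfl

lemma addB_injOn (μ : Partn) : Set.InjOn (addB μ) (addIdx μ) := by
  intro j hj j' hj' he
  simp only [Finset.coe_sort_coe, mem_addIdx, Finset.mem_coe] at hj hj'
  by_contra hne
  have h1 : (addB μ j).parts j = μ.parts j + 1 := by rw [addB_parts hj]; simp
  have h2 : (addB μ j').parts j = μ.parts j := by rw [addB_parts hj']; simp [hne]
  rw [he] at h1; omega

lemma delB_injOn (μ : Partn) : Set.InjOn (delB μ) (remIdx μ) := by
  intro j hj j' hj' he
  simp only [Finset.coe_sort_coe, mem_remIdx, Finset.mem_coe] at hj hj'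
  by_contra hne
  have hr : μ.parts (j+1) < μ.parts j := hj
  have h1 : (delB μ j).parts j = μ.parts j - 1 := by rw [delB_parts hj]; simp
  have h2 : (delB μ j').parts j = μ.parts j := by rw [delB_parts hj']; simp [hne]
  rw [he] at h1; omega

noncomputable def covers (μ : Partn) : Finset Partn := (addIdx μ).image (addB μ)
noncomputable def covered (μ : Partn) : Finset Partn := (remIdx μ).image (delB μ)

lemma mem_covers {μ lam : Partn} : lam ∈ covers μ ↔ AddSqP μ lam := by
  rw [addSqP_iff]
  simp only [covers, Finset.mem_image, mem_addIdx]
  constructor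
  · rintro ⟨j, hj, rfl⟩; exact ⟨j, hj, rfl⟩
  · rintro ⟨j, hj, rfl⟩; exact ⟨j, hj, rfl⟩

lemma mem_covered {μ nu : Partn} : nu ∈ covered μ ↔ AddSqP nu μ := by
  rw [delSqP_iff]
  simp only [covered, Finset.mem_image, mem_remIdx]
  constructor
  · rintro ⟨j, hj, rfl⟩; exact ⟨j, hj, rfl⟩
  · rintro ⟨j, hj, rfl⟩; exact ⟨j, hj, rfl⟩

lemma card_addIdx (μ : Partn) : (addIdx μ).card = (remIdx μ).card + 1 := by
  have he : addIdx μ = insert 0 ((remIdx μ).image Nat.succ) := by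
    ext j
    simp only [mem_addIdx, Finset.mem_insert, Finset.mem_image, mem_remIdx]
    constructor
    · intro h
      rcases Nat.eq_zero_or_pos j with rfl | hj
      · exact Or.inl rfl
      · right
        refine ⟨j - 1, ?_, by omega⟩
        rcases h with h0 | hlt
        · omega
        · unfold Removable
          have : j - 1 + 1 = j := by omega
          rw [this]
          exact hlt
    · rintro (rfl | ⟨i, hi, rfl⟩)
      · exact Or.inl rfl
      · right
        unfold Removable at hi
        have : i + 1 - 1 = i := by omega
        rw [Nat.succ_eq_add_one, this]
        exact hi
  rw [he, Finset.card_insert_of_notMem (by simp), Finset.card_image_of_injective _ Nat.succ_injective]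

lemma card_covers (μ : Partn) : (covers μ).card = (remIdx μ).card + 1 := by
  rw [covers, Finset.card_image_of_injOn (addB_injOn μ), card_addIdx]

lemma card_covered (μ : Partn) : (covered μ).card = (remIdx μ).card := by
  rw [covered, Finset.card_image_of_injOn (delB_injOn μ)]

lemma covered_empty : covered Partn.empty = ∅ := by
  ext nu
  simp only [mem_covered, Finset.notMem_empty, iff_false]
  rintro ⟨j, hj, -⟩
  exact absurd hj (by simp [Partn.empty])

lemma empty_not_mem_covers (β : Partn) : Partn.empty ∉ covers β := by
  rw [mem_covers]
  rintro ⟨j, hj, -⟩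
  exact absurd hj (by simp [Partn.empty])

end Chunk2


section Chunk3
open Classical

lemma addB_parts' {μ : Partn} {j : ℕ} (h : Addable μ j) (t : ℕ) :
    (addB μ j).parts t = if t = j then μ.parts j + 1 else μ.parts t := by
  rw [addB_parts h]

lemma delB_parts' {μ : Partn} {j : ℕ} (h : Removable μ j) (t : ℕ) :
    (delB μ j).parts t = if t = j then μ.parts j - 1 else μ.parts t := by
  rw [delB_parts h]

lemma R1 {β : Partn} {i : ℕ} (h : Addable β i) : Removable (addB β i) i := by
  unfold Removable
  rw [addB_parts' h, addB_parts' h]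
  have : β.parts (i+1) ≤ β.parts i := β.antitone _ _ (Nat.le_succ _)
  split_ifs <;> omega

lemma R2 {β : Partn} {i : ℕ} (h : Addable β i) : delB (addB β i) i = β := by
  ext1
  funext t
  rw [delB_parts' (R1 h)]
  by_cases ht : t = i
  · subst ht
    rw [if_pos rfl, addB_parts' h, if_pos rfl]
    omega
  · rw [if_neg ht, addB_parts' h, if_neg ht]

lemma R3 {β : Partn} {j : ℕ} (h : Removable β j) : Addable (delB β j) j := by
  rcases Nat.eq_zero_or_pos j with rfl | hj
  · exact Or.inl rfl
  · right
    rw [delB_parts' h, delB_parts' h]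
    have h1 : β.parts j ≤ β.parts (j-1) := β.antitone _ _ (by omega)
    have h2 : β.parts (j+1) < β.parts j := h
    split_ifs <;> omega

lemma R4 {β : Partn} {j : ℕ} (h : Removable β j) : addB (delB β j) j = β := by
  have h2 : β.parts (j+1) < β.parts j := h
  ext1
  funext t
  rw [addB_parts' (R3 h)]
  by_cases ht : t = j
  · subst ht
    rw [if_pos rfl, delB_parts' h, if_pos rfl]
    omega
  · rw [if_neg ht, delB_parts' h, if_neg ht]

/-- key equivalence for the off-diagonal terms -/
lemma keyK {β : Partn} {i j : ℕ} (hij : i ≠ j) :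
    (Addable β i ∧ Removable (addB β i) j) ↔ (Removable β j ∧ Addable (delB β j) i) := by
  have hmono1 : β.parts (j+1) ≤ β.parts j := β.antitone _ _ (Nat.le_succ _)
  by_cases hcase : i = j + 1
  · subst hcase
    have hmono2 : β.parts (j+1+1) ≤ β.parts (j+1) := β.antitone _ _ (Nat.le_succ _)
    constructor
    · rintro ⟨ha, hr⟩
      have hr' : (addB β (j+1)).parts (j+1) < (addB β (j+1)).parts j := hr
      rw [addB_parts' ha, addB_parts' ha] at hr'
      have hx : β.parts (j+1) + 1 < β.parts j := by
        revert hr'; split_ifs <;> omega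
      have hrem : Removable β j := by unfold Removable; omega
      refine ⟨hrem, Or.inr ?_⟩
      rw [delB_parts' hrem, delB_parts' hrem]
      split_ifs <;> omega
    · rintro ⟨hr, ha⟩
      have hrv : β.parts (j+1) < β.parts j := hr
      have hx : β.parts (j+1) + 1 < β.parts j := by
        rcases ha with h0 | hlt
        · omega
        · rw [delB_parts' hr, delB_parts' hr] at hlt
          revert hlt; split_ifs <;> omega
      have ha' : Addable β (j+1) := by
        right; simp only [Nat.add_sub_cancel]; omega
      refine ⟨ha', ?_⟩
      unfold Removable
      rw [addB_parts' ha', addB_parts' ha']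
      split_ifs <;> omega
  · -- i ≠ j + 1 and i ≠ j : both sides reduce to Addable β i ∧ Removable β j
    have e1 : ∀ h : Addable β i, (Removable (addB β i) j ↔ Removable β j) := by
      intro h
      unfold Removable
      rw [addB_parts' h, addB_parts' h]
      split_ifs <;> first | rfl | omega
    have e2 : ∀ h : Removable β j, (Addable (delB β j) i ↔ Addable β i) := by
      intro h
      have hv : β.parts (j+1) < β.parts j := h
      unfold Addable
      rw [delB_parts' h, delB_parts' h]
      rcases Nat.eq_zero_or_pos i with rfl | hi
      · simp
      · have hne : ¬ i - 1 = j := by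
          intro e
          exact hcase (by omega)
        rw [if_neg hij, if_neg hne]
    constructor
    · rintro ⟨ha, hr⟩
      have hr' := (e1 ha).1 hr
      exact ⟨hr', (e2 hr').2 ha⟩
    · rintro ⟨hr, ha⟩
      have ha' := (e2 hr).1 ha
      exact ⟨ha', (e1 ha').2 hr⟩

lemma keyE {β : Partn} {i j : ℕ} (hij : i ≠ j) (ha : Addable β i) (hr : Removable (addB β i) j) :
    delB (addB β i) j = addB (delB β j) i := by
  obtain ⟨hr', ha'⟩ := (keyK hij).1 ⟨ha, hr⟩
  have hv : β.parts (j+1) < β.parts j := hr'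
  ext1
  funext t
  rw [delB_parts' hr, addB_parts' ha, addB_parts' ha, addB_parts' ha', delB_parts' hr',
    delB_parts' hr']
  split_ifs <;> omega

end Chunk3


section Chunk4
open Classical Finset

noncomputable def opA (x : Partn → ℕ) : Partn → ℕ := fun μ => x μ + ∑ ν ∈ covered μ, x ν
noncomputable def opB (x : Partn → ℕ) : Partn → ℕ := fun β => x β + ∑ μ ∈ covers β, x μ

lemma sum_covered (x : Partn → ℕ) (μ : Partn) :
    ∑ ν ∈ covered μ, x ν = ∑ j ∈ remIdx μ, x (delB μ j) :=
  Finset.sum_image (fun a ha b hb h =>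
    delB_injOn μ (by simpa using ha) (by simpa using hb) h)

lemma sum_covers (x : Partn → ℕ) (μ : Partn) :
    ∑ ν ∈ covers μ, x ν = ∑ j ∈ addIdx μ, x (addB μ j) :=
  Finset.sum_image (fun a ha b hb h =>
    addB_injOn μ (by simpa using ha) (by simpa using hb) h)

lemma lemmaDU (x : Partn → ℕ) (β : Partn) :
    ∑ μ ∈ covers β, ∑ ν ∈ covered μ, x ν
      = (∑ ν ∈ covered β, ∑ μ ∈ covers ν, x μ) + x β := by
  rw [sum_covers (fun μ => ∑ ν ∈ covered μ, x ν), sum_covered (fun ν => ∑ μ ∈ covers ν, x μ)]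
  have hL : ∀ i ∈ addIdx β,
      ∑ ν ∈ covered (addB β i), x ν
        = (∑ j ∈ (remIdx (addB β i)).erase i, x (delB (addB β i) j)) + x β := by
    intro i hi
    rw [mem_addIdx] at hi
    rw [sum_covered]
    rw [← Finset.sum_erase_add _ _ (mem_remIdx.2 (R1 hi))]
    rw [R2 hi]
  have hR : ∀ j ∈ remIdx β,
      ∑ μ ∈ covers (delB β j), x μ
        = (∑ i ∈ (addIdx (delB β j)).erase j, x (addB (delB β j) i)) + x β := by
    intro j hj
    rw [mem_remIdx] at hj
    rw [sum_covers]
    rw [← Finset.sum_erase_add _ _ (mem_addIdx.2 (R3 hj))]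
    rw [R4 hj]
  rw [Finset.sum_congr rfl hL, Finset.sum_congr rfl hR]
  rw [Finset.sum_add_distrib, Finset.sum_add_distrib, Finset.sum_const, Finset.sum_const]
  have hoff : ∑ i ∈ addIdx β, ∑ j ∈ (remIdx (addB β i)).erase i, x (delB (addB β i) j)
      = ∑ j ∈ remIdx β, ∑ i ∈ (addIdx (delB β j)).erase j, x (addB (delB β j) i) := by
    rw [Finset.sum_sigma', Finset.sum_sigma']
    refine Finset.sum_nbij' (fun p => ⟨p.2, p.1⟩) (fun p => ⟨p.2, p.1⟩) ?_ ?_ ?_ ?_ ?_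
    · rintro ⟨i, j⟩ hp
      simp only [Finset.mem_sigma, mem_addIdx, Finset.mem_erase, mem_remIdx] at hp ⊢
      obtain ⟨hi, hj1, hj2⟩ := hp
      have hij : i ≠ j := fun e => hj1 e.symm
      obtain ⟨h1, h2⟩ := (keyK hij).1 ⟨hi, hj2⟩
      exact ⟨h1, hij, h2⟩
    · rintro ⟨j, i⟩ hp
      simp only [Finset.mem_sigma, mem_remIdx, Finset.mem_erase, mem_addIdx] at hp ⊢
      obtain ⟨hj, hi1, hi2⟩ := hp
      have hij : i ≠ j := hi1
      obtain ⟨h1, h2⟩ := (keyK hij).2 ⟨hj, hi2⟩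
      exact ⟨h1, fun e => hij e.symm, h2⟩
    · rintro ⟨i, j⟩ _; rfl
    · rintro ⟨j, i⟩ _; rfl
    · rintro ⟨i, j⟩ hp
      simp only [Finset.mem_sigma, mem_addIdx, Finset.mem_erase, mem_remIdx] at hp
      obtain ⟨hi, hj1, hj2⟩ := hp
      have hij : i ≠ j := fun e => hj1 e.symm
      rw [keyE hij hi hj2]
  rw [hoff, card_addIdx]
  ring
end Chunk4


section Chunk5
open Classical Finset

noncomputable def deltaE : Partn → ℕ := fun β => if β = Partn.empty then 1 else 0

lemma opA_add (x y : Partn → ℕ) : opA (x + y) = opA x + opA y := by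
  funext β
  simp only [opA, Pi.add_apply, Finset.sum_add_distrib]
  ring

lemma opB_add (x y : Partn → ℕ) : opB (x + y) = opB x + opB y := by
  funext β
  simp only [opB, Pi.add_apply, Finset.sum_add_distrib]
  ring

lemma opA_smul (c : ℕ) (x : Partn → ℕ) : opA (c • x) = c • opA x := by
  funext β
  simp only [opA, Pi.smul_apply, smul_eq_mul, Finset.mul_sum, Nat.mul_add]

lemma opB_smul (c : ℕ) (x : Partn → ℕ) : opB (c • x) = c • opB x := by
  funext β
  simp only [opB, Pi.smul_apply, smul_eq_mul, Finset.mul_sum, Nat.mul_add]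

lemma commW (x : Partn → ℕ) : opB (opA x) = opA (opB x) + x := by
  funext β
  simp only [opA, opB, Pi.add_apply, Finset.sum_add_distrib]
  rw [lemmaDU]
  ring

lemma opB_deltaE : opB deltaE = deltaE := by
  funext β
  simp only [opB]
  rw [Finset.sum_eq_zero, add_zero]
  intro μ hμ
  have : μ ≠ Partn.empty := by
    intro e; rw [e] at hμ; exact empty_not_mem_covers β hμ
  simp [deltaE, this]

lemma opA_apply_empty (x : Partn → ℕ) : opA x Partn.empty = x Partn.empty := by
  simp [opA, covered_empty]

noncomputable def wv : ℕ → Partn → ℕ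
  | 0 => deltaE
  | k+1 => opA (wv k)

def cnk : ℕ → ℕ → ℕ
  | 0, 0 => 1
  | 0, _+1 => 0
  | n+1, 0 => cnk n 0
  | n+1, k+1 => (k+2) * cnk n (k+1) + cnk n k

lemma cnk_gt : ∀ n k, n < k → cnk n k = 0 := by
  intro n
  induction n with
  | zero => intro k hk; match k, hk with | k+1, _ => rfl
  | succ n ih =>
    intro k hk
    match k, hk with
    | k+1, hk => 
      show (k+2) * cnk n (k+1) + cnk n k = 0
      rw [ih (k+1) (by omega), ih k (by omega)]
      ring

lemma opB_wv (k : ℕ) : opB (wv (k+1)) = wv (k+1) + (k+1) • wv k := by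
  induction k with
  | zero =>
    show opB (opA deltaE) = _
    rw [commW, opB_deltaE]
    show opA deltaE + deltaE = opA deltaE + 1 • deltaE
    rw [one_smul]
  | succ k ih =>
    show opB (opA (wv (k+1))) = _
    rw [commW, ih, opA_add, opA_smul]
    show opA (wv (k+1)) + (k+1) • opA (wv k) + wv (k+1)
      = opA (wv (k+1)) + (k+2) • wv (k+1)
    show opA (wv (k+1)) + (k+1) • wv (k+1) + wv (k+1)
      = opA (wv (k+1)) + (k+2) • wv (k+1)
    rw [add_assoc, ← succ_nsmul]

noncomputable def vecf : ℕ → Partn → ℕ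
  | 0 => deltaE
  | n+1 => opB (opA (vecf n))

lemma opA_sum {s : Finset ℕ} {f : ℕ → Partn → ℕ} :
    opA (∑ k ∈ s, f k) = ∑ k ∈ s, opA (f k) := by
  induction s using Finset.induction with
  | empty =>
    simp only [Finset.sum_empty]
    funext β; simp [opA]
  | insert _ _ hns ih =>
    rw [Finset.sum_insert hns, Finset.sum_insert hns, opA_add, ih]

lemma opB_sum {s : Finset ℕ} {f : ℕ → Partn → ℕ} :
    opB (∑ k ∈ s, f k) = ∑ k ∈ s, opB (f k) := by
  induction s using Finset.induction with
  | empty =>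
    simp only [Finset.sum_empty]
    funext β; simp [opB]
  | insert _ _ hns ih =>
    rw [Finset.sum_insert hns, Finset.sum_insert hns, opB_add, ih]

lemma vecf_eq (n : ℕ) : vecf n = ∑ k ∈ Finset.range (n+1), cnk n k • wv k := by
  induction n with
  | zero =>
    show deltaE = _
    rw [Finset.sum_range_one]
    show deltaE = (1:ℕ) • wv 0
    rw [one_smul]
    rfl
  | succ n ih =>
    show opB (opA (vecf n)) = _
    rw [ih, opA_sum, opB_sum]
    have step : ∀ k, opB (opA (cnk n k • wv k)) = cnk n k • wv (k+1) + (cnk n k * (k+1)) • wv k := by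
      intro k
      rw [opA_smul, opB_smul]
      have : opA (wv k) = wv (k+1) := rfl
      rw [this, opB_wv, smul_add, smul_smul]
    rw [Finset.sum_congr rfl (fun k _ => step k), Finset.sum_add_distrib]
    -- LHS = ∑_{k<n+1} cnk n k • wv (k+1) + ∑_{k<n+1} (cnk n k * (k+1)) • wv k
    rw [Finset.sum_range_succ' (fun k => cnk (n+1) k • wv k) (n+1)]
    have hc0 : cnk (n+1) 0 = cnk n 0 := rfl
    have hcs : ∀ k, cnk (n+1) (k+1) = (k+2) * cnk n (k+1) + cnk n k := fun k => rfl
    have expand : ∑ k ∈ Finset.range (n+1), cnk (n+1) (k+1) • wv (k+1)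
        = ∑ k ∈ Finset.range (n+1), ((k+2) * cnk n (k+1)) • wv (k+1)
          + ∑ k ∈ Finset.range (n+1), cnk n k • wv (k+1) := by
      rw [← Finset.sum_add_distrib]
      refine Finset.sum_congr rfl (fun k _ => ?_)
      rw [hcs k, add_smul]
    rw [expand, hc0]
    -- now match the second big sum: ∑_{k<n+1} (cnk n k * (k+1)) • wv k
    --   = ∑_{k<n+1} ((k+2) * cnk n (k+1)) • wv (k+1) + cnk n 0 • wv 0
    have second : ∑ k ∈ Finset.range (n+1), (cnk n k * (k+1)) • wv k
        = ∑ k ∈ Finset.range (n+1), ((k+2) * cnk n (k+1)) • wv (k+1) + cnk n 0 • wv 0 := by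
      rw [Finset.sum_range_succ' (fun k => (cnk n k * (k+1)) • wv k) n]
      congr 1
      · -- ∑_{k<n} (cnk n (k+1) * (k+2)) • wv (k+1) = ∑_{k<n+1} ((k+2) * cnk n (k+1)) • wv (k+1)
        rw [Finset.sum_range_succ (fun k => ((k+2) * cnk n (k+1)) • wv (k+1)) n]
        rw [cnk_gt n (n+1) (by omega)]
        simp only [mul_zero, zero_smul, add_zero]
        refine Finset.sum_congr rfl (fun k _ => ?_)
        rw [mul_comm]
      · norm_num
    rw [second]
    abel

lemma wv_empty (k : ℕ) : wv k Partn.empty = 1 := by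
  induction k with
  | zero => simp [wv, deltaE]
  | succ k ih => rw [wv, opA_apply_empty, ih]

lemma vecf_empty (n : ℕ) : vecf n Partn.empty = ∑ k ∈ Finset.range (n+1), cnk n k := by
  rw [vecf_eq]
  rw [Finset.sum_apply]
  refine Finset.sum_congr rfl (fun k _ => ?_)
  rw [Pi.smul_apply, wv_empty, smul_eq_mul, mul_one]

end Chunk5


section Chunk6
open Classical Finset

/-- helper: cardinality of a finite disjoint union indexed by a Finset -/
lemma ncard_fin_biUnion {ι α : Type*} (t : Finset ι) (F : ι → Set α)
    (hfin : ∀ i ∈ t, (F i).Finite)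
    (hdisj : ∀ i ∈ t, ∀ j ∈ t, i ≠ j → Disjoint (F i) (F j)) :
    (⋃ i ∈ t, F i).Finite ∧ (⋃ i ∈ t, F i).ncard = ∑ i ∈ t, (F i).ncard := by
  classical
  induction t using Finset.induction with
  | empty => simp
  | @insert a s has ih =>
    have hfin' : ∀ i ∈ s, (F i).Finite := fun i hi => hfin i (Finset.mem_insert_of_mem hi)
    have hdisj' : ∀ i ∈ s, ∀ j ∈ s, i ≠ j → Disjoint (F i) (F j) := fun i hi j hj =>
      hdisj i (Finset.mem_insert_of_mem hi) j (Finset.mem_insert_of_mem hj)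
    obtain ⟨hEf, hEc⟩ := ih hfin' hdisj'
    have hsplit : (⋃ i ∈ insert a s, F i) = F a ∪ ⋃ i ∈ s, F i := by
      simp [Set.biUnion_insert]
    have hFa : (F a).Finite := hfin a (Finset.mem_insert_self a s)
    have hd : Disjoint (F a) (⋃ i ∈ s, F i) := by
      rw [Set.disjoint_left]
      intro x hx hx'
      simp only [Set.mem_iUnion] at hx'
      obtain ⟨i, hi, hxi⟩ := hx'
      have hne : a ≠ i := fun e => has (e ▸ hi)
      exact (Set.disjoint_left.1 (hdisj a (Finset.mem_insert_self a s) i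
        (Finset.mem_insert_of_mem hi) hne)) hx hxi
    constructor
    · rw [hsplit]; exact hFa.union hEf
    · rw [hsplit, Set.ncard_union_eq hd hFa hEf, hEc, Finset.sum_insert has]

/-- odd step relation -/
def RaRel (α μ : Partn) : Prop := μ = α ∨ AddSqP α μ

/-- even step relation -/
def RdRel (μ β : Partn) : Prop := β = μ ∨ AddSqP β μ

def Sset (n : ℕ) (β : Partn) : Set (ℕ → Partn) :=
  {f | f 0 = Partn.empty ∧ (∀ i, 2*n ≤ i → f i = β) ∧
       (∀ i, 2*i+1 ≤ 2*n → RaRel (f (2*i)) (f (2*i+1))) ∧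
       (∀ i, 2*i+2 ≤ 2*n → RdRel (f (2*i+1)) (f (2*i+2)))}

lemma self_not_mem_covers (β : Partn) : β ∉ covers β := by
  rw [mem_covers]
  rintro ⟨j, hj, -⟩
  omega

lemma self_not_mem_covered (β : Partn) : β ∉ covered β := by
  rw [mem_covered]
  rintro ⟨j, hj, -⟩
  omega

lemma mem_insert_covers {μ β : Partn} : μ ∈ insert β (covers β) ↔ RdRel μ β := by
  simp only [Finset.mem_insert, mem_covers, RdRel]
  constructor
  · rintro (rfl | h); exacts [Or.inl rfl, Or.inr h]
  · rintro (rfl | h); exacts [Or.inl rfl, Or.inr h]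

lemma mem_insert_covered {α μ : Partn} : α ∈ insert μ (covered μ) ↔ RaRel α μ := by
  simp only [Finset.mem_insert, mem_covered, RaRel]
  constructor
  · rintro (rfl | h); exacts [Or.inl rfl, Or.inr h]
  · rintro (rfl | h); exacts [Or.inl rfl, Or.inr h]

lemma vecf_succ (n : ℕ) (β : Partn) :
    vecf (n+1) β = ∑ μ ∈ insert β (covers β), ∑ α ∈ insert μ (covered μ), vecf n α := by
  show opB (opA (vecf n)) β = _
  rw [Finset.sum_insert (self_not_mem_covers β)]
  have inner : ∀ μ, ∑ α ∈ insert μ (covered μ), vecf n α = opA (vecf n) μ := by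
    intro μ
    rw [Finset.sum_insert (self_not_mem_covered μ)]
    rfl
  rw [inner β]
  simp only [opB]
  congr 1
  exact Finset.sum_congr rfl (fun μ _ => (inner μ).symm)

def ExtF (n : ℕ) (β μ : Partn) (g : ℕ → Partn) : ℕ → Partn :=
  fun i => if i ≤ 2*n then g i else if i = 2*n+1 then μ else β

lemma sset_count : ∀ n β, (Sset n β).Finite ∧ (Sset n β).ncard = vecf n β := by
  intro n
  induction n with
  | zero =>
    intro β
    by_cases hβ : β = Partn.empty
    · subst hβ
      have he : Sset 0 Partn.empty = {fun _ => Partn.empty} := by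
        ext f
        simp only [Sset, Set.mem_setOf_eq, Set.mem_singleton_iff]
        constructor
        · rintro ⟨h0, hconst, -, -⟩
          funext i
          exact hconst i (by omega)
        · rintro rfl
          refine ⟨rfl, fun i _ => rfl, fun i hi => by omega, fun i hi => by omega⟩
      rw [he]
      exact ⟨Set.finite_singleton _, by simp [vecf, deltaE]⟩
    · have he : Sset 0 β = ∅ := by
        ext f
        simp only [Sset, Set.mem_setOf_eq, Set.mem_empty_iff_false, iff_false]
        rintro ⟨h0, hconst, -, -⟩
        exact hβ ((hconst 0 (by omega)).symm.trans h0)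
      rw [he]
      exact ⟨Set.finite_empty, by simp [vecf, deltaE, hβ]⟩
  | succ n ih =>
    intro β
    set t : Finset ((_ : Partn) × Partn) :=
      (insert β (covers β)).sigma (fun μ => insert μ (covered μ)) with ht
    have hdecomp : Sset (n+1) β = ⋃ p ∈ t, (ExtF n β p.1) '' (Sset n p.2) := by
      ext f
      simp only [Set.mem_iUnion, Set.mem_image]
      constructor
      · intro hf
        obtain ⟨h0, htail, hodd, heven⟩ := hf
        refine ⟨⟨f (2*n+1), f (2*n)⟩, ?_, fun i => if i ≤ 2*n then f i else f (2*n), ?_, ?_⟩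
        · rw [ht, Finset.mem_sigma, mem_insert_covers, mem_insert_covered]
          constructor
          · have h2 : f (2*(n+1)) = β := htail _ (by omega)
            have := heven n (by omega)
            rw [show 2*n+2 = 2*(n+1) by ring, h2] at this
            exact this
          · exact hodd n (by omega)
        · refine ⟨?_, ?_, ?_, ?_⟩
          · simp only [show (0:ℕ) ≤ 2*n by omega, if_pos]; exact h0
          · intro i hi
            by_cases hile : i ≤ 2*n
            · have : i = 2*n := by omega
              rw [this]
              simp
            · simp only [if_neg hile]
          · intro i hi
            have h1 : 2*i ≤ 2*n := by omega
            have h2 : 2*i+1 ≤ 2*n := hi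
            simp only [if_pos h1, if_pos h2]
            exact hodd i (by omega)
          · intro i hi
            have h1 : 2*i+1 ≤ 2*n := by omega
            have h2 : 2*i+2 ≤ 2*n := hi
            simp only [if_pos h1, if_pos h2]
            exact heven i (by omega)
        · funext i
          simp only [ExtF]
          by_cases h1 : i ≤ 2*n
          · simp only [if_pos h1]
          · simp only [if_neg h1]
            by_cases h2 : i = 2*n+1
            · subst h2; simp
            · simp only [if_neg h2]
              exact (htail i (by omega)).symm
      · rintro ⟨⟨μ, α⟩, hp, g, hg, rfl⟩
        rw [ht, Finset.mem_sigma, mem_insert_covers, mem_insert_covered] at hp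
        obtain ⟨hμβ, hαμ⟩ := hp
        obtain ⟨hg0, hgtail, hgodd, hgeven⟩ := hg
        have hg2n : g (2*n) = α := hgtail _ le_rfl
        refine ⟨?_, ?_, ?_, ?_⟩
        · simp only [ExtF, show (0:ℕ) ≤ 2*n by omega, if_pos]; exact hg0
        · intro i hi
          simp only [ExtF, if_neg (show ¬ i ≤ 2*n by omega),
            if_neg (show ¬ i = 2*n+1 by omega)]
        · intro i hi
          by_cases hin : i = n
          · rw [hin]
            simp only [ExtF, if_pos (show 2*n ≤ 2*n from le_rfl),
              if_neg (show ¬ (2*n+1 ≤ 2*n) by omega), if_pos rfl, hg2n]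
            exact hαμ
          · have h1 : 2*i+1 ≤ 2*n := by omega
            simp only [ExtF, if_pos (show 2*i ≤ 2*n by omega), if_pos h1]
            exact hgodd i h1
        · intro i hi
          by_cases hin : i = n
          · rw [hin]
            simp only [ExtF, if_neg (show ¬ (2*n+1 ≤ 2*n) by omega), if_pos rfl,
              if_neg (show ¬ (2*n+2 ≤ 2*n) by omega), if_neg (show ¬ (2*n+2 = 2*n+1) by omega)]
            exact hμβ
          · have h1 : 2*i+2 ≤ 2*n := by omega
            simp only [ExtF, if_pos (show 2*i+1 ≤ 2*n by omega), if_pos h1]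
            exact hgeven i h1
    have hinj : ∀ (μ α : Partn), Set.InjOn (ExtF n β μ) (Sset n α) := by
      intro μ α g hg g' hg' he
      funext i
      by_cases h1 : i ≤ 2*n
      · have := congrFun he i
        simpa only [ExtF, if_pos h1] using this
      · rw [hg.2.1 i (by omega), hg'.2.1 i (by omega)]
    have hfin : ∀ p ∈ t, ((ExtF n β p.1) '' (Sset n p.2)).Finite :=
      fun p _ => Set.Finite.image _ (ih p.2).1
    have hdisj : ∀ p ∈ t, ∀ q ∈ t, p ≠ q →
        Disjoint ((ExtF n β p.1) '' (Sset n p.2)) ((ExtF n β q.1) '' (Sset n q.2)) := by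
      rintro ⟨μ, α⟩ hp ⟨μ', α'⟩ hq hne
      rw [Set.disjoint_left]
      rintro f ⟨g, hg, rfl⟩ ⟨g', hg', he⟩
      apply hne
      have e1 : μ' = μ := by
        have := congrFun he (2*n+1)
        simpa only [ExtF, if_neg (show ¬ (2*n+1 ≤ 2*n) by omega), if_pos rfl, if_true] using this
      have e2 : α' = α := by
        have h1 : g (2*n) = α := hg.2.1 (2*n) le_rfl
        have h2 : g' (2*n) = α' := hg'.2.1 (2*n) le_rfl
        have hthis := congrFun he (2*n)
        simp only [ExtF, if_pos (le_refl (2*n))] at hthis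
        rw [h1, h2] at hthis
        exact hthis
      subst e1; subst e2; rfl
    obtain ⟨hF, hC⟩ := ncard_fin_biUnion t _ hfin hdisj
    rw [hdecomp]
    refine ⟨hF, ?_⟩
    rw [hC, vecf_succ, ht, Finset.sum_sigma]
    refine Finset.sum_congr rfl (fun μ _ => ?_)
    refine Finset.sum_congr rfl (fun α _ => ?_)
    rw [Set.ncard_image_of_injOn (hinj μ α), (ih α).2]

end Chunk6


section Chunk7
open Classical Finset

def fillSet (n k : ℕ) : Set (Finset (ℕ × ℕ)) := {S | IsFilling n S ∧ S.card + k = n}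

def cprev (n : ℕ) : ℕ → ℕ
  | 0 => 0
  | m+1 => cnk n m

lemma cprev_rec (n k : ℕ) : cprev n k + (k+1) * cnk n k = cnk (n+1) k := by
  cases k with
  | zero =>
    show 0 + 1 * cnk n 0 = cnk n 0
    omega
  | succ m =>
    show cnk n m + (m+1+1) * cnk n (m+1) = (m+2) * cnk n (m+1) + cnk n m
    ring

lemma filling_card_le {n : ℕ} {S : Finset (ℕ × ℕ)} (h : IsFilling n S) : S.card ≤ n := by
  obtain ⟨hb, hrow, -⟩ := h
  have hinj : Set.InjOn Prod.fst (S : Set (ℕ × ℕ)) := by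
    intro p hp q hq he
    exact hrow p (by simpa using hp) q (by simpa using hq) he
  have h1 : (S.image Prod.fst).card = S.card := Finset.card_image_of_injOn hinj
  have h2 : S.image Prod.fst ⊆ Finset.Icc 1 n := by
    intro r hr
    simp only [Finset.mem_image] at hr
    obtain ⟨p, hp, rfl⟩ := hr
    have := hb p hp
    simp only [Finset.mem_Icc]
    omega
  calc S.card = (S.image Prod.fst).card := h1.symm
    _ ≤ (Finset.Icc 1 n).card := Finset.card_le_card h2
    _ = n := by simp

lemma fill_finite (n : ℕ) : {S : Finset (ℕ × ℕ) | IsFilling n S}.Finite := by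
  apply Set.Finite.subset (((Finset.Icc 1 n ×ˢ Finset.Icc 1 n).powerset : Finset (Finset (ℕ × ℕ))).finite_toSet)
  intro S hS
  simp only [Finset.coe_powerset, Set.mem_preimage, Set.mem_powerset_iff, Finset.coe_subset,
    Finset.mem_coe, Finset.mem_powerset]
  intro p hp
  have := hS.1 p hp
  simp only [Finset.mem_product, Finset.mem_Icc]
  omega

lemma fill_count : ∀ n k, (fillSet n k).Finite ∧ (fillSet n k).ncard = cnk n k := by
  intro n
  induction n with
  | zero =>
    intro k
    have hempty : IsFilling 0 (∅ : Finset (ℕ × ℕ)) := by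
      refine ⟨?_, ?_, ?_⟩ <;> intro p hp <;> simp at hp
    match k with
    | 0 =>
      have he : fillSet 0 0 = {(∅ : Finset (ℕ × ℕ))} := by
        ext S
        simp only [fillSet, Set.mem_setOf_eq, Set.mem_singleton_iff]
        constructor
        · rintro ⟨h, hc⟩
          rw [← Finset.card_eq_zero]
          omega
        · rintro rfl
          exact ⟨hempty, by simp⟩
      rw [he]
      exact ⟨Set.finite_singleton _, by simp [cnk]⟩
    | k+1 =>
      have he : fillSet 0 (k+1) = ∅ := by
        ext S
        simp only [fillSet, Set.mem_setOf_eq, Set.mem_empty_iff_false, iff_false]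
        rintro ⟨-, hc⟩
        omega
      rw [he]
      exact ⟨Set.finite_empty, by simp [cnk]⟩
  | succ n ih =>
    intro k
    -- decompose according to whether row n+1 is used
    set E0 : Set (Finset (ℕ × ℕ)) := {S | S ∈ fillSet (n+1) k ∧ ∀ c, ((n+1 : ℕ), c) ∉ S} with hE0
    set E1 : Set (Finset (ℕ × ℕ)) := {S | S ∈ fillSet (n+1) k ∧ ∃ c, ((n+1 : ℕ), c) ∈ S} with hE1
    have hsplit : fillSet (n+1) k = E0 ∪ E1 := by
      ext S
      simp only [hE0, hE1, Set.mem_union, Set.mem_setOf_eq]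
      by_cases hc : ∃ c, ((n+1 : ℕ), c) ∈ S
      · tauto
      · push_neg at hc
        tauto
    have hrow_le : ∀ {S : Finset (ℕ × ℕ)}, IsFilling n S → ∀ c, ((n+1:ℕ), c) ∉ S := by
      intro S hS c hmem
      have := hS.1 _ hmem
      omega
    -- E0 equals fillings of the smaller staircase with card + k = n + 1
    have hE0eq : E0 = {S | IsFilling n S ∧ S.card + k = n + 1} := by
      ext S
      simp only [hE0, fillSet, Set.mem_setOf_eq]
      constructor
      · rintro ⟨⟨hf, hc⟩, hno⟩
        refine ⟨⟨?_, hf.2.1, hf.2.2⟩, hc⟩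
        intro p hp
        have hb := hf.1 p hp
        have : p.1 ≠ n + 1 := by
          intro e
          exact hno p.2 (by rw [← e]; exact hp)
        omega
      · rintro ⟨hf, hc⟩
        refine ⟨⟨⟨?_, hf.2.1, hf.2.2⟩, hc⟩, hrow_le hf⟩
        intro p hp
        have := hf.1 p hp
        omega
    -- the available-column Finset
    set availF : Finset (ℕ × ℕ) → Finset ℕ :=
      fun S' => Finset.Icc 1 (n+1) \ S'.image Prod.snd with havail
    have hcols : ∀ {S' : Finset (ℕ × ℕ)}, IsFilling n S' →
        (S'.image Prod.snd).card = S'.card := by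
      intro S' hS'
      apply Finset.card_image_of_injOn
      intro p hp q hq he
      exact hS'.2.2 p (by simpa using hp) q (by simpa using hq) he
    have hcolsub : ∀ {S' : Finset (ℕ × ℕ)}, IsFilling n S' →
        S'.image Prod.snd ⊆ Finset.Icc 1 (n+1) := by
      intro S' hS' c hc
      simp only [Finset.mem_image] at hc
      obtain ⟨p, hp, rfl⟩ := hc
      have := hS'.1 p hp
      simp only [Finset.mem_Icc]
      omega
    have havailcard : ∀ {S' : Finset (ℕ × ℕ)}, S' ∈ fillSet n k → (availF S').card = k + 1 := by
      intro S' hS'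
      rw [havail]
      rw [Finset.card_sdiff_of_subset (hcolsub hS'.1), hcols hS'.1]
      have := hS'.2
      simp only [Nat.card_Icc]
      omega
    obtain ⟨hfinn, hcountn⟩ := ih k
    set FF : Finset (Finset (ℕ × ℕ)) := hfinn.toFinset with hFF
    have hFFmem : ∀ S', S' ∈ FF ↔ S' ∈ fillSet n k := by
      intro S'; rw [hFF, Set.Finite.mem_toFinset]
    -- E1 as a disjoint union of images
    have hE1eq : E1 = ⋃ S' ∈ FF, (fun c => insert ((n+1:ℕ), c) S') '' (availF S' : Set ℕ) := by
      ext S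
      simp only [Set.mem_iUnion, Set.mem_image, Finset.mem_coe]
      constructor
      · rintro ⟨⟨hf, hc⟩, c, hmem⟩
        set S' := S.erase ((n+1:ℕ), c) with hS'
        have hfn : IsFilling n S' := by
          refine ⟨?_, ?_, ?_⟩
          · intro p hp
            have hpS : p ∈ S := Finset.mem_of_mem_erase hp
            have hb := hf.1 p hpS
            have hne : p ≠ ((n+1:ℕ), c) := Finset.ne_of_mem_erase hp
            have : p.1 ≠ n+1 := by
              intro e
              exact hne (hf.2.1 p hpS _ hmem (by rw [e]))
            omega
          · intro p hp q hq he
            exact hf.2.1 p (Finset.mem_of_mem_erase hp) q (Finset.mem_of_mem_erase hq) he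
          · intro p hp q hq he
            exact hf.2.2 p (Finset.mem_of_mem_erase hp) q (Finset.mem_of_mem_erase hq) he
        have hcard : S'.card + 1 = S.card := by
          rw [hS']
          rw [Finset.card_erase_of_mem hmem]
          have : 0 < S.card := Finset.card_pos.2 ⟨_, hmem⟩
          omega
        refine ⟨S', ?_, c, ?_, ?_⟩
        · rw [hFFmem]
          exact ⟨hfn, by omega⟩
        · have hb := hf.1 _ hmem
          simp only [havail, Finset.mem_sdiff, Finset.mem_Icc, Finset.mem_image]
          constructor
          · simp only at hb; omega
          · rintro ⟨p, hp, hpc⟩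
            have hpS : p ∈ S := Finset.mem_of_mem_erase hp
            have : p = ((n+1:ℕ), c) := hf.2.2 p hpS _ hmem hpc
            exact (Finset.ne_of_mem_erase hp) this
        · rw [hS', Finset.insert_erase hmem]
      · rintro ⟨S', hS', c, hc, rfl⟩
        rw [hFFmem] at hS'
        obtain ⟨hfn, hcardn⟩ := hS'
        simp only [havail, Finset.mem_sdiff, Finset.mem_Icc, Finset.mem_image, not_exists] at hc
        obtain ⟨⟨hc1, hc2⟩, hcno⟩ := hc
        have hnotmem : ((n+1:ℕ), c) ∉ S' := hrow_le hfn c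
        constructor
        · constructor
          · refine ⟨?_, ?_, ?_⟩
            · intro p hp
              rcases Finset.mem_insert.1 hp with rfl | hp'
              · simp only; omega
              · have := hfn.1 p hp'
                omega
            · intro p hp q hq he
              rcases Finset.mem_insert.1 hp with rfl | hp' <;>
                rcases Finset.mem_insert.1 hq with rfl | hq'
              · rfl
              · exfalso; have := hfn.1 q hq'; simp only at he; omega
              · exfalso; have := hfn.1 p hp'; simp only at he; omega
              · exact hfn.2.1 p hp' q hq' he
            · intro p hp q hq he
              rcases Finset.mem_insert.1 hp with rfl | hp' <;>
                rcases Finset.mem_insert.1 hq with rfl | hq'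
              · rfl
              · exfalso; exact hcno q ⟨hq', by simp only at he ⊢; omega⟩
              · exfalso; exact hcno p ⟨hp', by simp only at he ⊢; omega⟩
              · exact hfn.2.2 p hp' q hq' he
          · rw [Finset.card_insert_of_notMem hnotmem]
            omega
        · exact ⟨c, Finset.mem_insert_self _ _⟩
    -- injectivity of the insert maps
    have hinsinj : ∀ S' ∈ FF, Set.InjOn (fun c => insert ((n+1:ℕ), c) S') (availF S' : Set ℕ) := by
      intro S' hS' c hc c' hc' he
      rw [hFFmem] at hS'
      have heq : insert ((n+1:ℕ), c) S' = insert ((n+1:ℕ), c') S' := he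
      have hnm : ((n+1:ℕ), c) ∉ S' := hrow_le hS'.1 c
      have hmem : ((n+1:ℕ), c) ∈ insert ((n+1:ℕ), c') S' := by
        rw [← heq]; exact Finset.mem_insert_self _ _
      rcases Finset.mem_insert.1 hmem with h | h
      · exact (Prod.mk.injEq _ _ _ _ ▸ h).2
      · exact absurd h (hrow_le hS'.1 c)
    have hfins : ∀ S' ∈ FF, ((fun c => insert ((n+1:ℕ), c) S') '' (availF S' : Set ℕ)).Finite :=
      fun S' _ => Set.Finite.image _ (availF S').finite_toSet
    have hdisj : ∀ S' ∈ FF, ∀ S'' ∈ FF, S' ≠ S'' →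
        Disjoint ((fun c => insert ((n+1:ℕ), c) S') '' (availF S' : Set ℕ))
          ((fun c => insert ((n+1:ℕ), c) S'') '' (availF S'' : Set ℕ)) := by
      intro S' hS' S'' hS'' hne
      rw [Set.disjoint_left]
      rintro S ⟨c, hc, rfl⟩ ⟨c', hc', he⟩
      apply hne
      rw [hFFmem] at hS' hS''
      have heq : insert ((n+1:ℕ), c') S'' = insert ((n+1:ℕ), c) S' := he
      have hc'' : c' = c := by
        have hmem : ((n+1:ℕ), c') ∈ insert ((n+1:ℕ), c) S' := by
          rw [← heq]; exact Finset.mem_insert_self _ _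
        rcases Finset.mem_insert.1 hmem with h | h
        · exact (Prod.mk.injEq _ _ _ _ ▸ h).2
        · exact absurd h (hrow_le hS'.1 c')
      subst hc''
      have h1 : (insert ((n+1:ℕ), c') S').erase ((n+1:ℕ), c') = S' :=
        Finset.erase_insert (hrow_le hS'.1 c')
      have h2 : (insert ((n+1:ℕ), c') S'').erase ((n+1:ℕ), c') = S'' :=
        Finset.erase_insert (hrow_le hS''.1 c')
      rw [← h1, ← h2, heq]
    obtain ⟨hE1fin, hE1card⟩ := ncard_fin_biUnion FF _ hfins hdisj
    rw [← hE1eq] at hE1fin hE1card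
    have hE1count : E1.ncard = (k+1) * cnk n k := by
      rw [hE1card]
      have : ∀ S' ∈ FF, ((fun c => insert ((n+1:ℕ), c) S') '' (availF S' : Set ℕ)).ncard = k+1 := by
        intro S' hS'
        rw [Set.ncard_image_of_injOn (hinsinj S' hS')]
        rw [Set.ncard_coe_finset]
        exact havailcard ((hFFmem S').1 hS')
      rw [Finset.sum_congr rfl this, Finset.sum_const, smul_eq_mul, mul_comm]
      congr 1
      rw [← hcountn]
      exact (Set.ncard_eq_toFinset_card _ hfinn).symm
    -- E0 count
    have hE0fin : E0.Finite := by
      apply Set.Finite.subset (fill_finite (n+1))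
      intro S hS
      exact hS.1.1
    have hE0card : E0.ncard = cprev n k := by
      rcases Nat.eq_zero_or_eq_succ_pred k with hk | hk
      · rw [hk]
        have : E0 = ∅ := by
          rw [hE0eq]
          ext S
          simp only [Set.mem_setOf_eq, Set.mem_empty_iff_false, iff_false, not_and]
          intro hf
          have := filling_card_le hf
          omega
        rw [this]
        simp [cprev]
      · rw [hk]
        have : E0 = fillSet n (k-1) := by
          rw [hE0eq]
          ext S
          simp only [fillSet, Set.mem_setOf_eq]
          constructor
          · rintro ⟨h1, h2⟩; exact ⟨h1, by omega⟩
          · rintro ⟨h1, h2⟩; exact ⟨h1, by omega⟩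
        rw [this]
        show (fillSet n (k-1)).ncard = cnk n (k-1)
        exact (ih (k-1)).2
    have hdisj01 : Disjoint E0 E1 := by
      rw [Set.disjoint_left]
      rintro S ⟨-, hno⟩ ⟨-, c, hc⟩
      exact hno c hc
    constructor
    · rw [hsplit]
      exact hE0fin.union hE1fin
    · rw [hsplit, Set.ncard_union_eq hdisj01 hE0fin hE1fin, hE0card, hE1count]
      exact cprev_rec n k

end Chunk7


/-- Theorem 2.5: for every `n ≥ 0`, 01-fillings of `Δ_n` with at most one 1 per row and
per column are equinumerous with sequences `(λ^0, …, λ^{2n})` of partitions with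
`λ^0 = λ^{2n} = ∅` where each `λ^{2i+1}` equals `λ^{2i}` or is obtained from it by adding
a square, and each `λ^{2i+2}` equals `λ^{2i+1}` or is obtained from it by deleting a
square. -/


theorem stmt17 (n : ℕ) :
    {S : Finset (ℕ × ℕ) | IsFilling n S}.ncard =
    {f : ℕ → Partn | (∀ i, 2 * n < i → f i = Partn.empty) ∧
      f 0 = Partn.empty ∧ f (2 * n) = Partn.empty ∧
      (∀ i, 2 * i + 1 ≤ 2 * n →
        f (2 * i + 1) = f (2 * i) ∨ AddSqP (f (2 * i)) (f (2 * i + 1))) ∧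
      (∀ i, 2 * i + 2 ≤ 2 * n →
        f (2 * i + 2) = f (2 * i + 1) ∨ AddSqP (f (2 * i + 2)) (f (2 * i + 1)))}.ncard := by
  classical
  have hLHS : {S : Finset (ℕ × ℕ) | IsFilling n S} = ⋃ k ∈ Finset.range (n+1), fillSet n k := by
    ext S
    simp only [Set.mem_setOf_eq, Set.mem_iUnion, Finset.mem_range]
    constructor
    · intro h
      exact ⟨n - S.card, by have := filling_card_le h; omega,
        h, by have := filling_card_le h; omega⟩
    · rintro ⟨k, -, h, -⟩; exact h
  have hdisj : ∀ k ∈ Finset.range (n+1), ∀ k' ∈ Finset.range (n+1), k ≠ k' →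
      Disjoint (fillSet n k) (fillSet n k') := by
    intro k _ k' _ hne
    rw [Set.disjoint_left]
    rintro S ⟨-, h1⟩ ⟨-, h2⟩
    exact hne (by omega)
  obtain ⟨hF, hC⟩ := ncard_fin_biUnion (Finset.range (n+1)) (fillSet n)
    (fun k _ => (fill_count n k).1) hdisj
  rw [hLHS, hC]
  have h1 : ∑ k ∈ Finset.range (n+1), (fillSet n k).ncard
      = ∑ k ∈ Finset.range (n+1), cnk n k :=
    Finset.sum_congr rfl (fun k _ => (fill_count n k).2)
  rw [h1, ← vecf_empty, ← (sset_count n Partn.empty).2]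
  congr 1
  ext f
  simp only [Sset, Set.mem_setOf_eq]
  constructor
  · rintro ⟨h0, htail, hodd, heven⟩
    exact ⟨fun i hi => htail i (by omega), h0, htail _ le_rfl, hodd, heven⟩
  · rintro ⟨h1', h2, h3, h4, h5⟩
    refine ⟨h2, fun i hi => ?_, h4, h5⟩
    rcases eq_or_lt_of_le hi with he | hlt
    · rw [← he]; exact h3
    · exact h1' i hlt
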